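/- arXiv:1506.03508 — 3 statements merged into one kernel-verified Lean document; each statement's English description precedes it below -/
import Mathlib

section
/- (MacMahon.) Let p₁,…,p_m be positive integers with p = p₁+⋯+p_m. Then (∏_{j=1}^{m} (q)_{p_j}) · ∑_w q^{maj(w)} = (q)_p in ℤ[q], where the sum is over all multiset permutations w of {1^{p₁},…,m^{p_m}}; that is, the generating function of multiset permutations by major index is the q-multinomial coefficient (q)_p / ((q)_{p₁} ⋯ (q)_{p_m}). -/
open scoped Classical

/-- The descent set of the word `w 1, …, w p` (1-based positions). -/
def desSet (p : ℕ) (f : Fin p → ℕ) : Finset ℕ :=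
  (Finset.Ico 1 p).filter fun i =>
    ∃ (h1 : i - 1 < p) (h2 : i < p), f ⟨i, h2⟩ < f ⟨i - 1, h1⟩

/-- `(q)_n = (1-q)(1-q²)⋯(1-qⁿ)`. -/
noncomputable def qpoch (n : ℕ) : Polynomial ℤ :=
  ∏ i ∈ Finset.Icc 1 n, (1 - Polynomial.X ^ i)

open PowerSeries Finset

noncomputable section

/-- geometric-type series `1/(1-X^a)`. -/
noncomputable def Gs (a : ℕ) : PowerSeries ℤ :=
  PowerSeries.mk fun N => if a ∣ N then 1 else 0

lemma one_sub_X_pow_mul_Gs {a : ℕ} (ha : 0 < a) :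
    ((1 : PowerSeries ℤ) - PowerSeries.X ^ a) * Gs a = 1 := by
  ext N
  rw [sub_mul, one_mul, map_sub, PowerSeries.coeff_X_pow_mul']
  rcases Nat.eq_zero_or_pos N with rfl | hN
  · have : ¬ a ≤ 0 := by omega
    simp [Gs, this]
  · by_cases hle : a ≤ N
    · have hiff : a ∣ N - a ↔ a ∣ N := by
        constructor
        · intro h
          have h2 : a ∣ (N - a) + a := Dvd.dvd.add h (dvd_refl a)
          rwa [Nat.sub_add_cancel hle] at h2
        · intro h; exact Nat.dvd_sub h (dvd_refl a)
      rw [if_pos hle]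
      simp only [Gs, PowerSeries.coeff_mk, PowerSeries.coeff_one]
      by_cases hd : a ∣ N
      · simp [hd, hiff.mpr hd, hN.ne']
      · simp only [hd, if_false, hiff.not.mpr hd, sub_zero, if_neg hN.ne']
    · have hd : ¬ a ∣ N := fun h => hle (Nat.le_of_dvd hN h)
      rw [if_neg hle]
      simp [Gs, hd, hN.ne']

lemma finite_fiber {α β : Type*} [Fintype β] (u : α → ℕ) (ϕ : α → β → ℕ)
    (hϕ : Function.Injective ϕ) (hle : ∀ a x, ϕ a x ≤ u a) (N : ℕ) :
    Finite {a : α // u a = N} := by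
  apply Finite.of_injective
    (fun a => (fun x => (⟨ϕ a.1 x, by have := hle a.1 x; have := a.2; omega⟩ : Fin (N+1))))
  intro a b h
  apply Subtype.ext; apply hϕ; funext x
  exact congrArg Fin.val (congrFun h x)

lemma natcard_sigma {ι : Type*} [Fintype ι] (f : ι → Type*) [∀ i, Finite (f i)] :
    Nat.card ((i : ι) × f i) = ∑ i, Nat.card (f i) := by
  letI : ∀ i, Fintype (f i) := fun i => Fintype.ofFinite _
  simp [Nat.card_eq_fintype_card, Fintype.card_sigma]

lemma coeff_mul_count {α β : Type*} (A B : PowerSeries ℤ) (u : α → ℕ) (v : β → ℕ)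
    (hA : ∀ N, Finite {a : α // u a = N}) (hB : ∀ N, Finite {b : β // v b = N})
    (cA : ∀ N, PowerSeries.coeff N A = Nat.card {a : α // u a = N})
    (cB : ∀ N, PowerSeries.coeff N B = Nat.card {b : β // v b = N}) (N : ℕ) :
    PowerSeries.coeff N (A * B) = Nat.card {x : α × β // u x.1 + v x.2 = N} := by
  classical
  rw [PowerSeries.coeff_mul]
  set Y := {x : α × β // u x.1 + v x.2 = N} with hY
  have hmem : ∀ x : Y, (u x.1.1, v x.1.2) ∈ Finset.HasAntidiagonal.antidiagonal N := by
    intro x; rw [Finset.HasAntidiagonal.mem_antidiagonal]; exact x.2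
  set g : Y → ↥(Finset.HasAntidiagonal.antidiagonal N) := fun x => ⟨(u x.1.1, v x.1.2), hmem x⟩ with hg
  have fibEquiv : ∀ q : ↥(Finset.HasAntidiagonal.antidiagonal N),
      {x : Y // g x = q} ≃ ({a : α // u a = (q : ℕ × ℕ).1} × {b : β // v b = (q : ℕ × ℕ).2}) := by
    intro q
    refine ⟨fun x => (⟨x.1.1.1, ?_⟩, ⟨x.1.1.2, ?_⟩), fun ab =>
      ⟨⟨(ab.1.1, ab.2.1), ?_⟩, ?_⟩, fun x => ?_, fun ab => ?_⟩
    · have h2 := congrArg Subtype.val x.2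
      exact congrArg Prod.fst h2
    · have h2 := congrArg Subtype.val x.2
      exact congrArg Prod.snd h2
    · rw [ab.1.2, ab.2.2]; exact Finset.HasAntidiagonal.mem_antidiagonal.mp q.2
    · apply Subtype.ext
      show ((u ab.1.1, v ab.2.1) : ℕ × ℕ) = (q : ℕ × ℕ)
      exact Prod.ext ab.1.2 ab.2.2
    · apply Subtype.ext; apply Subtype.ext; rfl
    · apply Prod.ext <;> apply Subtype.ext <;> rfl
  letI : ∀ q : ↥(Finset.HasAntidiagonal.antidiagonal N), Finite {x : Y // g x = q} := by
    intro q
    exact Finite.of_equiv _ (fibEquiv q).symm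
  have key : Nat.card Y = ∑ q : ↥(Finset.HasAntidiagonal.antidiagonal N), Nat.card {x : Y // g x = q} := by
    rw [← natcard_sigma]
    exact Nat.card_congr (Equiv.sigmaFiberEquiv g).symm
  have key2 : Nat.card Y = ∑ q ∈ Finset.HasAntidiagonal.antidiagonal N,
      Nat.card {a : α // u a = q.1} * Nat.card {b : β // v b = q.2} := by
    rw [key, ← Finset.sum_coe_sort (Finset.HasAntidiagonal.antidiagonal N)
      (fun q => Nat.card {a : α // u a = q.1} * Nat.card {b : β // v b = q.2})]
    apply Finset.sum_congr rfl
    intro q _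
    rw [Nat.card_congr (fibEquiv q), Nat.card_prod]
  rw [key2]
  push_cast
  exact Finset.sum_congr rfl fun q _ => by rw [cA q.1, cB q.2]

noncomputable def Ds (n : ℕ) : PowerSeries ℤ := ∏ i ∈ Finset.Icc 1 n, Gs i

lemma qpoch_coe_mul_Ds (n : ℕ) : (qpoch n : PowerSeries ℤ) * Ds n = 1 := by
  rw [qpoch, ← Polynomial.coeToPowerSeries.ringHom_apply, map_prod, Ds,
    ← Finset.prod_mul_distrib]
  apply Finset.prod_eq_one
  intro i hi
  rw [map_sub, map_one, map_pow, Polynomial.coeToPowerSeries.ringHom_apply,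
    Polynomial.coe_X]
  exact one_sub_X_pow_mul_Gs (by simp at hi; omega)

lemma coeff_Gs_card {a : ℕ} (ha : 0 < a) (N : ℕ) :
    PowerSeries.coeff N (Gs a) = Nat.card {c : ℕ // a * c = N} := by
  by_cases hd : a ∣ N
  · obtain ⟨c₀, rfl⟩ := hd
    letI : Unique {c : ℕ // a * c = a * c₀} :=
      ⟨⟨⟨c₀, rfl⟩⟩, by
        rintro ⟨c, hc⟩
        exact Subtype.ext (Nat.eq_of_mul_eq_mul_left ha hc)⟩
    rw [show Nat.card {c // a * c = a * c₀} = 1 from Nat.card_unique]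
    simp [Gs, dvd_mul_right a c₀]
  · haveI : IsEmpty {c : ℕ // a * c = N} := ⟨fun c => hd ⟨c.1, c.2.symm⟩⟩
    simp [Gs, hd, Nat.card_of_isEmpty]

/-- antitone sequences of length `n`. -/
def Anti (n : ℕ) : Type := {f : Fin n → ℕ // Antitone f}

def awt {n : ℕ} (a : Anti n) : ℕ := ∑ i, a.1 i

lemma finite_anti (n N : ℕ) : Finite {a : Anti n // awt a = N} :=
  finite_fiber awt (fun a => a.1)
    (fun a b h => Subtype.ext h)
    (fun a x => Finset.single_le_sum (f := a.1) (fun i _ => Nat.zero_le _) (Finset.mem_univ x))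
    N

/-- the splitting equivalence for antitone sequences. -/
def antiSnoc (n : ℕ) : Anti n × ℕ ≃ Anti (n + 1) where
  toFun x := ⟨Fin.snoc (fun i => x.1.1 i + x.2) x.2, by
    intro i j hij
    rcases Fin.eq_castSucc_or_eq_last j with ⟨j', rfl⟩ | rfl
    · rcases Fin.eq_castSucc_or_eq_last i with ⟨i', rfl⟩ | rfl
      · simp only [Fin.snoc_castSucc]
        have hij' : i' ≤ j' := by
          rwa [Fin.castSucc_le_castSucc_iff] at hij
        exact Nat.add_le_add_right (x.1.2 hij') _
      · exact absurd (Fin.castSucc_lt_last j') (not_lt.mpr hij)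
    · rcases Fin.eq_castSucc_or_eq_last i with ⟨i', rfl⟩ | rfl
      · simp only [Fin.snoc_castSucc, Fin.snoc_last]; omega
      · simp⟩
  invFun f := (⟨fun i => f.1 i.castSucc - f.1 (Fin.last n), by
      intro i j hij
      exact Nat.sub_le_sub_right (f.2 (Fin.castSucc_le_castSucc_iff.mpr hij)) _⟩,
    f.1 (Fin.last n))
  left_inv := by
    rintro ⟨g, c⟩
    refine Prod.ext (Subtype.ext (funext fun i => ?_)) ?_
    · simp [Fin.snoc_castSucc, Fin.snoc_last]
    · simp [Fin.snoc_last]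
  right_inv := by
    rintro ⟨f, hf⟩
    apply Subtype.ext
    funext i
    rcases Fin.eq_castSucc_or_eq_last i with ⟨i', rfl⟩ | rfl
    · simp only [Fin.snoc_castSucc]
      exact Nat.sub_add_cancel (hf (Fin.le_last _))
    · simp [Fin.snoc_last]

lemma awt_antiSnoc {n : ℕ} (x : Anti n × ℕ) :
    awt ((antiSnoc n) x) = awt x.1 + (n + 1) * x.2 := by
  obtain ⟨⟨g, hg⟩, c⟩ := x
  have hfst : ((antiSnoc n) (⟨g, hg⟩, c)).1 = Fin.snoc (fun i => g i + c) c := rfl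
  show ∑ i, ((antiSnoc n) (⟨g, hg⟩, c)).1 i = (∑ i, g i) + (n + 1) * c
  rw [hfst, Fin.sum_univ_castSucc]
  simp only [Fin.snoc_castSucc, Fin.snoc_last]
  rw [Finset.sum_add_distrib, Finset.sum_const, Finset.card_univ, Fintype.card_fin,
    smul_eq_mul]
  ring

lemma coeff_Ds (n : ℕ) (N : ℕ) :
    PowerSeries.coeff N (Ds n) = Nat.card {a : Anti n // awt a = N} := by
  induction n generalizing N with
  | zero =>
    rw [Ds, show Finset.Icc 1 0 = ∅ from Finset.Icc_eq_empty (by omega), Finset.prod_empty]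
    rcases Nat.eq_zero_or_pos N with rfl | hN
    · letI : Unique {a : Anti 0 // awt a = 0} :=
        ⟨⟨⟨⟨Fin.elim0, fun i => i.elim0⟩, by simp [awt]⟩⟩, by
          rintro ⟨⟨f, hf⟩, h⟩
          apply Subtype.ext; apply Subtype.ext
          funext i; exact i.elim0⟩
      simp [Nat.card_unique]
    · haveI : IsEmpty {a : Anti 0 // awt a = N} :=
        ⟨by rintro ⟨a, ha⟩; rw [awt] at ha; simp at ha; omega⟩
      simp [Nat.card_of_isEmpty, hN.ne']
  | succ n ih =>
    have hsplit : Ds (n + 1) = Ds n * Gs (n + 1) := by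
      rw [Ds, Ds, show Finset.Icc 1 (n+1) = insert (n+1) (Finset.Icc 1 n) by
        ext x; simp; omega, Finset.prod_insert (by simp), mul_comm]
    rw [hsplit,
      coeff_mul_count (Ds n) (Gs (n+1)) awt (fun c => (n+1) * c)
        (finite_anti n) (fun N => Finite.of_injective
          (fun c : {c : ℕ // (n+1) * c = N} => (⟨c.1, by
            have h := c.2
            have h2 : c.1 ≤ (n+1) * c.1 := Nat.le_mul_of_pos_left _ (by omega)
            omega⟩ : Fin (N+1)))
          (fun a b h => Subtype.ext (congrArg Fin.val h)))
        ih (coeff_Gs_card (by omega))]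
    congr 1
    norm_cast
    apply Nat.card_congr
    exact Equiv.subtypeEquiv (antiSnoc n) (fun x => by rw [awt_antiSnoc])

variable {p : ℕ}

/-- extension of `f` to `ℕ` by zero. -/
def Fx (f : Fin p → ℕ) (k : ℕ) : ℕ := if h : k < p then f ⟨k, h⟩ else 0

/-- `k, k+1` is a descent (0-based adjacent pair). -/
def isDes (f : Fin p → ℕ) (k : ℕ) : Prop := k + 1 < p ∧ Fx f (k + 1) < Fx f k

def desF (f : Fin p → ℕ) : Finset ℕ := (Finset.range p).filter (isDes f)

def maj (f : Fin p → ℕ) : ℕ := ∑ k ∈ desF f, (k + 1)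

def dstat (f : Fin p → ℕ) (i : ℕ) : ℕ := ((desF f).filter (fun t => i ≤ t)).card

def Compat (f h : Fin p → ℕ) : Prop :=
  ∀ k (hk : k + 1 < p), h ⟨k + 1, hk⟩ + (if isDes f k then 1 else 0) ≤ h ⟨k, by omega⟩

lemma desSet_eq (f : Fin p → ℕ) : desSet p f = (desF f).image (· + 1) := by
  ext i
  simp only [desSet, desF, isDes, Finset.mem_image, Finset.mem_filter, Finset.mem_Ico,
    Finset.mem_range]
  constructor
  · rintro ⟨⟨h1, h2⟩, hlt, hlt2, hf⟩
    refine ⟨i - 1, ⟨by omega, by omega, ?_⟩, by omega⟩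
    have e1 : i - 1 + 1 = i := by omega
    rw [Fx, Fx, dif_pos (show i - 1 + 1 < p by omega), dif_pos (show i - 1 < p by omega)]
    simp only [e1] at *
    convert hf using 2
  · rintro ⟨k, ⟨hk, hk1, hf⟩, rfl⟩
    rw [Fx, Fx, dif_pos hk1, dif_pos (by omega : k < p)] at hf
    exact ⟨⟨by omega, by omega⟩, by omega, hk1, by simpa using hf⟩

lemma sum_desSet (f : Fin p → ℕ) : (desSet p f).sum id = maj f := by
  rw [desSet_eq, maj]
  rw [Finset.sum_image (by intro x _ y _ h; simp only at h; omega)]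
  rfl

lemma dstat_zero (f : Fin p → ℕ) {i : ℕ} (hi : p ≤ i + 1) : dstat f i = 0 := by
  rw [dstat, Finset.card_eq_zero, Finset.filter_eq_empty_iff]
  rintro t ht hit
  rw [desF, Finset.mem_filter] at ht
  exact absurd ht.2.1 (by omega)

lemma dstat_succ (f : Fin p → ℕ) (i : ℕ) :
    dstat f i = dstat f (i + 1) + (if isDes f i then 1 else 0) := by
  have hsplit : (desF f).filter (fun t => i ≤ t)
      = ((desF f).filter (fun t => i + 1 ≤ t)) ∪ ((desF f).filter (fun t => t = i)) := by
    ext t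
    simp only [Finset.mem_filter, Finset.mem_union]
    constructor
    · rintro ⟨h1, h2⟩
      rcases Nat.lt_or_ge t (i+1) with h | h
      · exact Or.inr ⟨h1, by omega⟩
      · exact Or.inl ⟨h1, h⟩
    · rintro (⟨h1, h2⟩ | ⟨h1, h2⟩) <;> exact ⟨h1, by omega⟩
  have hdisj : Disjoint ((desF f).filter (fun t => i + 1 ≤ t))
      ((desF f).filter (fun t => t = i)) := by
    rw [Finset.disjoint_left]
    intro a ha hb
    simp only [Finset.mem_filter] at ha hb
    omega
  rw [dstat, hsplit, Finset.card_union_of_disjoint hdisj]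
  have h2 : ((desF f).filter (fun t => t = i)).card = if isDes f i then 1 else 0 := by
    rw [Finset.filter_eq']
    by_cases hd : isDes f i
    · have : i ∈ desF f := by
        rw [desF, Finset.mem_filter, Finset.mem_range]
        exact ⟨by have := hd.1; omega, hd⟩
      simp [this, hd]
    · have : i ∉ desF f := by
        rw [desF, Finset.mem_filter]
        tauto
      simp [this, hd]
  rw [h2]
  rfl

lemma dstat_le {f h : Fin p → ℕ} (hc : Compat f h) :
    ∀ k (hk : k < p), dstat f k ≤ h ⟨k, hk⟩ := by
  have aux : ∀ g k (hk : k + g + 1 = p), dstat f k ≤ h ⟨k, by omega⟩ := by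
    intro g
    induction g with
    | zero =>
      intro k hk
      rw [dstat_zero f (by omega)]
      exact Nat.zero_le _
    | succ g ih =>
      intro k hk
      have h1 := ih (k + 1) (by omega)
      have h2 := hc k (by omega)
      rw [dstat_succ]
      by_cases hd : isDes f k <;> simp only [hd, if_true, if_false] at h2 ⊢ <;> omega
  intro k hk
  exact aux (p - k - 1) k (by omega)

lemma card_le_t {t : ℕ} (ht : t < p) :
    (Finset.univ.filter fun i : Fin p => (i : ℕ) ≤ t).card = t + 1 := by
  rw [← Finset.card_image_of_injective _ Fin.val_injective]
  have himg : (Finset.univ.filter fun i : Fin p => (i : ℕ) ≤ t).image Fin.val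
      = Finset.range (t + 1) := by
    ext x
    simp only [Finset.mem_image, Finset.mem_filter, Finset.mem_univ, true_and,
      Finset.mem_range]
    constructor
    · rintro ⟨a, ha, rfl⟩; omega
    · intro hx; exact ⟨⟨x, by omega⟩, show x ≤ t by omega, rfl⟩
  rw [himg, Finset.card_range]

lemma sum_dstat (f : Fin p → ℕ) : ∑ i : Fin p, dstat f (i : ℕ) = maj f := by
  have h1 : ∀ i : Fin p, dstat f (i : ℕ)
      = ∑ t ∈ desF f, if (i : ℕ) ≤ t then 1 else 0 := by
    intro i; rw [dstat, Finset.card_filter]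
  simp only [h1]
  rw [Finset.sum_comm]
  apply Finset.sum_congr rfl
  intro t ht
  have htp : t < p := by
    rw [desF, Finset.mem_filter, Finset.mem_range] at ht
    exact ht.1
  rw [← Finset.card_filter]
  exact card_le_t htp

/-- adjacent condition implies antitone -/
lemma antitone_of_adj {g : Fin p → ℕ}
    (hadj : ∀ k (hk : k + 1 < p), g ⟨k + 1, hk⟩ ≤ g ⟨k, by omega⟩) : Antitone g := by
  have aux : ∀ d k (hk : k + d < p), g ⟨k + d, hk⟩ ≤ g ⟨k, by omega⟩ := by
    intro d
    induction d with
    | zero => intro k hk; exact le_refl _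
    | succ d ih =>
      intro k hk
      have h1 : g ⟨k + (d+1), hk⟩ ≤ g ⟨k + d, by omega⟩ := hadj (k + d) (by omega)
      exact le_trans h1 (ih k (by omega))
  intro i j hij
  have h1 := aux ((j : ℕ) - (i : ℕ)) (i : ℕ) (by omega)
  have e1 : (⟨(i : ℕ) + ((j : ℕ) - (i : ℕ)), by omega⟩ : Fin p) = j := by
    apply Fin.ext; simp; omega
  have e2 : (⟨(i : ℕ), by omega⟩ : Fin p) = i := by apply Fin.ext; rfl
  rwa [e1, e2] at h1

lemma compat_antitone {f h : Fin p → ℕ} (hc : Compat f h) : Antitone h := by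
  apply antitone_of_adj
  intro k hk
  have := hc k hk
  by_cases hd : isDes f k <;> simp [hd] at this <;> omega


def CptT (f : Fin p → ℕ) : Type := {h : Fin p → ℕ // Compat f h}
def cwt {f : Fin p → ℕ} (x : CptT f) : ℕ := ∑ i, x.1 i

/-- the staircase equivalence. -/
def cptEquiv (f : Fin p → ℕ) (N : ℕ) (hm : maj f ≤ N) :
    {a : Anti p // awt a = N - maj f} ≃ {x : CptT f // cwt x = N} where
  toFun a := ⟨⟨fun i => a.1.1 i + dstat f (i : ℕ), by
      intro k hk
      have h1 := dstat_succ f k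
      have h2 : a.1.1 ⟨k + 1, hk⟩ ≤ a.1.1 ⟨k, by omega⟩ :=
        a.1.2 (by rw [Fin.mk_le_mk]; omega)
      by_cases hd : isDes f k <;>
        simp only [hd, if_true, if_false] at h1 ⊢ <;> omega⟩, by
      show (∑ i : Fin p, (a.1.1 i + dstat f (i : ℕ))) = N
      rw [Finset.sum_add_distrib, sum_dstat]
      have h3 := a.2
      rw [awt] at h3
      omega⟩
  invFun x := ⟨⟨fun i => x.1.1 i - dstat f (i : ℕ), by
      apply antitone_of_adj
      intro k hk
      have h1 := dstat_succ f k
      have h2 := x.1.2 k hk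
      have h3 := dstat_le x.1.2 k (by omega)
      have h4 := dstat_le x.1.2 (k+1) hk
      by_cases hd : isDes f k <;>
        simp only [hd, if_true, if_false] at h1 h2 ⊢ <;> omega⟩, by
      show (∑ i : Fin p, (x.1.1 i - dstat f (i : ℕ))) = N - maj f
      have h5 : (∑ i : Fin p, (x.1.1 i - dstat f (i : ℕ)))
          + ∑ i : Fin p, dstat f (i : ℕ) = ∑ i : Fin p, x.1.1 i := by
        rw [← Finset.sum_add_distrib]
        apply Finset.sum_congr rfl
        intro i _
        have := dstat_le x.1.2 (i : ℕ) i.2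
        simp only [Fin.eta] at this
        omega
      have h6 := x.2
      rw [cwt] at h6
      rw [sum_dstat] at h5
      omega⟩
  left_inv a := by
    apply Subtype.ext; apply Subtype.ext; funext i
    show a.1.1 i + dstat f (i : ℕ) - dstat f (i : ℕ) = a.1.1 i
    omega
  right_inv x := by
    apply Subtype.ext; apply Subtype.ext; funext i
    show x.1.1 i - dstat f (i : ℕ) + dstat f (i : ℕ) = x.1.1 i
    have := dstat_le x.1.2 (i : ℕ) i.2
    simp only [Fin.eta] at this
    omega

lemma coeff_Xmaj_mul_Ds (f : Fin p → ℕ) (N : ℕ) :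
    PowerSeries.coeff N ((PowerSeries.X : PowerSeries ℤ) ^ (maj f) * Ds p)
      = Nat.card {x : CptT f // cwt x = N} := by
  rw [PowerSeries.coeff_X_pow_mul']
  by_cases hm : maj f ≤ N
  · rw [if_pos hm, coeff_Ds]
    norm_cast
    exact Nat.card_congr (cptEquiv f N hm)
  · rw [if_neg hm]
    haveI : IsEmpty {x : CptT f // cwt x = N} := ⟨by
      rintro ⟨x, hx⟩
      apply hm
      rw [← hx, cwt, ← sum_dstat f]
      apply Finset.sum_le_sum
      intro i _
      have := dstat_le x.2 (i : ℕ) i.2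
      simpa only [Fin.eta] using this⟩
    simp [Nat.card_of_isEmpty]

lemma Fx_eq (f : Fin p → ℕ) {k : ℕ} (hk : k < p) : Fx f k = f ⟨k, hk⟩ := dif_pos hk

-- rank lemmas
lemma card_filter_lt_fin {K : ℕ} (k : Fin K) :
    (Finset.univ.filter fun i : Fin K => i < k).card = (k : ℕ) := by
  rw [← Finset.card_image_of_injective _ Fin.val_injective]
  have himg : (Finset.univ.filter fun i : Fin K => i < k).image Fin.val
      = Finset.range (k : ℕ) := by
    ext x
    simp only [Finset.mem_image, Finset.mem_filter, Finset.mem_univ, true_and,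
      Finset.mem_range]
    constructor
    · rintro ⟨a, ha, rfl⟩; exact ha
    · intro hx
      exact ⟨⟨x, by omega⟩, by rw [Fin.lt_def]; exact hx, rfl⟩
  rw [himg, Finset.card_range]

lemma rank_lt {s : Finset (Fin p)} {K : ℕ} (hs : s.card = K) {i : Fin p} (hi : i ∈ s) :
    (s.filter (· < i)).card < K := by
  rw [← hs]
  apply Finset.card_lt_card
  rw [Finset.ssubset_iff_of_subset (Finset.filter_subset _ _)]
  exact ⟨i, hi, by simp⟩

lemma rank_strict {s : Finset (Fin p)} {a b : Fin p} (ha : a ∈ s) (hab : a < b) :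
    (s.filter (· < a)).card < (s.filter (· < b)).card := by
  apply Finset.card_lt_card
  rw [Finset.ssubset_iff_of_subset (by
    intro x hx
    simp only [Finset.mem_filter] at hx ⊢
    exact ⟨hx.1, lt_trans hx.2 hab⟩)]
  exact ⟨a, by simp [ha, hab], by simp⟩

lemma orderEmbOfFin_rank {s : Finset (Fin p)} {K : ℕ} (hs : s.card = K) {i : Fin p}
    (hi : i ∈ s) (hlt : (s.filter (· < i)).card < K) :
    s.orderEmbOfFin hs ⟨(s.filter (· < i)).card, hlt⟩ = i := by
  obtain ⟨k, hk⟩ : ∃ k, s.orderEmbOfFin hs k = i := by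
    have h1 : i ∈ Set.range (s.orderEmbOfFin hs) := by
      rw [Finset.range_orderEmbOfFin]; exact hi
    exact h1
  have himg : s.filter (· < i) = (Finset.univ.filter fun k' : Fin K => k' < k).image
      (s.orderEmbOfFin hs) := by
    ext x
    simp only [Finset.mem_filter, Finset.mem_image, Finset.mem_univ, true_and]
    constructor
    · rintro ⟨hxs, hxi⟩
      have h2 : x ∈ Set.range (s.orderEmbOfFin hs) := by
        rw [Finset.range_orderEmbOfFin]; exact hxs
      obtain ⟨k', hk'⟩ := h2
      refine ⟨k', ?_, hk'⟩
      rw [← hk, ← hk'] at hxi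
      exact (s.orderEmbOfFin hs).strictMono.lt_iff_lt.mp hxi
    · rintro ⟨k', hk', rfl⟩
      exact ⟨Finset.orderEmbOfFin_mem s hs k', hk ▸ (s.orderEmbOfFin hs).strictMono hk'⟩
  have hcard : (s.filter (· < i)).card = (k : ℕ) := by
    rw [himg, Finset.card_image_of_injective _ (s.orderEmbOfFin hs).injective,
      card_filter_lt_fin]
  rw [show (⟨(s.filter (· < i)).card, hlt⟩ : Fin K) = k from Fin.ext hcard, hk]

-- the merged order
variable {m : ℕ}

structure TT (par : Fin m → ℕ) where
  j : Fin m
  k : Fin (par j)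

def ttEquiv (par : Fin m → ℕ) : TT par ≃ (j : Fin m) × Fin (par j) where
  toFun t := ⟨t.j, t.k⟩
  invFun s := ⟨s.1, s.2⟩
  left_inv t := rfl
  right_inv s := rfl

noncomputable instance (par : Fin m → ℕ) : Fintype (TT par) :=
  Fintype.ofEquiv _ (ttEquiv par).symm

lemma cardTT (par : Fin m → ℕ) {p : ℕ} (hp : p = ∑ j, par j) :
    Fintype.card (TT par) = p := by
  rw [Fintype.card_congr (ttEquiv par), Fintype.card_sigma]
  simp [hp]

lemma TT.ext' {par : Fin m → ℕ} {t t' : TT par} (h1 : t.j = t'.j)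
    (h2 : (t.k : ℕ) = (t'.k : ℕ)) : t = t' := by
  obtain ⟨j, k⟩ := t
  obtain ⟨j', k'⟩ := t'
  cases h1
  simp only [TT.mk.injEq, heq_eq_eq, true_and]
  exact Fin.ext h2

def keyF (par : Fin m → ℕ) (F : ∀ j : Fin m, Fin (par j) → ℕ)
    (t : TT par) : (OrderDual ℕ) ×ₗ ((Fin m) ×ₗ ℕ) :=
  toLex (OrderDual.toDual (F t.j t.k), toLex (t.j, (t.k : ℕ)))

lemma keyF_inj (par : Fin m → ℕ) (F : ∀ j : Fin m, Fin (par j) → ℕ) :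
    Function.Injective (keyF par F) := by
  intro t t' hkey
  have h2 : t.j = t'.j := congrArg (fun z => (ofLex (ofLex z).2).1) hkey
  have h3 : (t.k : ℕ) = (t'.k : ℕ) := congrArg (fun z => (ofLex (ofLex z).2).2) hkey
  exact TT.ext' h2 h3

end

noncomputable section S2
variable {m : ℕ}

lemma ttmk_inj {par : Fin m → ℕ} (j : Fin m) : Function.Injective (TT.mk (par := par) j) := by
  intro k k' h
  exact Fin.ext (by simpa using congrArg (fun t : TT par => (t.k : ℕ)) h)

lemma merge_surj (par : Fin m → ℕ) {p : ℕ} (hp : p = ∑ j, par j)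
    (F : ∀ j : Fin m, Fin (par j) → ℕ) (hF : ∀ j, Antitone (F j)) :
    ∃ (w : Fin p → Fin m) (hw : ∀ j, (Finset.univ.filter fun i => w i = j).card = par j)
      (h : Fin p → ℕ),
      Compat (fun k => ((w k : ℕ))) h ∧
      ∀ j k, h ((Finset.univ.filter fun i => w i = j).orderEmbOfFin (hw j) k) = F j k := by
  letI : LinearOrder (TT par) := LinearOrder.lift' (keyF par F) (keyF_inj par F)
  have hlt : ∀ x y : TT par, x < y ↔
      (F y.j y.k < F x.j x.k ∨ (F x.j x.k = F y.j y.k ∧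
        (((x.j : ℕ) < (y.j : ℕ)) ∨ (x.j = y.j ∧ (x.k : ℕ) < (y.k : ℕ))))) := by
    intro x y
    show keyF par F x < keyF par F y ↔ _
    rw [keyF, keyF, Prod.Lex.lt_iff, Prod.Lex.lt_iff]
    simp only [ofLex_toLex, OrderDual.toDual_lt_toDual, OrderDual.toDual_inj, Fin.lt_def]
  set e := monoEquivOfFin (TT par) (cardTT par hp) with he
  set w : Fin p → Fin m := fun i => (e i).j with hwdef
  set h : Fin p → ℕ := fun i => F (e i).j (e i).k with hhdef
  have hw : ∀ j, (Finset.univ.filter fun i => w i = j).card = par j := by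
    intro j
    have h1 : (Finset.univ.filter fun i : Fin p => w i = j).image (⇑e)
        = (Finset.univ.filter fun t : TT par => t.j = j) := by
      ext t
      simp only [Finset.mem_image, Finset.mem_filter, Finset.mem_univ, true_and]
      constructor
      · rintro ⟨i, hi, rfl⟩; exact hi
      · intro ht
        refine ⟨e.symm t, ?_, e.apply_symm_apply t⟩
        show (e (e.symm t)).j = j
        rw [e.apply_symm_apply]; exact ht
    have h2 : (Finset.univ.filter fun t : TT par => t.j = j)
        = (Finset.univ : Finset (Fin (par j))).image (TT.mk j) := by
      ext t
      obtain ⟨j', k⟩ := t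
      simp only [Finset.mem_filter, Finset.mem_univ, true_and, Finset.mem_image]
      constructor
      · rintro rfl; exact ⟨k, rfl⟩
      · rintro ⟨k', hk'⟩
        exact (congrArg TT.j hk').symm
    rw [← Finset.card_image_of_injective _ e.injective, h1, h2,
      Finset.card_image_of_injective _ (ttmk_inj j), Finset.card_univ,
      Fintype.card_fin]
  have hc : Compat (fun k => ((w k : ℕ))) h := by
    intro k hk
    have hlt2 : (⟨k, by omega⟩ : Fin p) < ⟨k + 1, hk⟩ := Fin.mk_lt_mk.mpr (by omega)
    have h3 := (hlt (e ⟨k, by omega⟩) (e ⟨k + 1, hk⟩)).mp (e.lt_iff_lt.mpr hlt2)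
    by_cases hd : isDes (fun k => ((w k : ℕ))) k
    · rw [if_pos hd]
      have hdlt : ((w ⟨k + 1, hk⟩ : ℕ)) < (w ⟨k, by omega⟩ : ℕ) := by
        have h6 := hd.2
        rwa [Fx_eq _ hk, Fx_eq _ (show k < p by omega)] at h6
      have hwa : (w ⟨k, by omega⟩ : ℕ) = ((e ⟨k, by omega⟩).j : ℕ) := rfl
      have hwb : (w ⟨k + 1, hk⟩ : ℕ) = ((e ⟨k + 1, hk⟩).j : ℕ) := rfl
      rcases h3 with h3 | ⟨heq, h4 | ⟨h5, h6⟩⟩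
      · show F (e ⟨k + 1, hk⟩).j (e ⟨k + 1, hk⟩).k + 1
          ≤ F (e ⟨k, by omega⟩).j (e ⟨k, by omega⟩).k
        omega
      · exact absurd h4 (by omega)
      · exact absurd (congrArg Fin.val h5) (by omega)
    · rw [if_neg hd]
      rcases h3 with h3 | ⟨heq, -⟩
      · show F (e ⟨k + 1, hk⟩).j (e ⟨k + 1, hk⟩).k + 0
          ≤ F (e ⟨k, by omega⟩).j (e ⟨k, by omega⟩).k
        omega
      · show F (e ⟨k + 1, hk⟩).j (e ⟨k + 1, hk⟩).k + 0
          ≤ F (e ⟨k, by omega⟩).j (e ⟨k, by omega⟩).k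
        omega
  refine ⟨w, hw, h, hc, ?_⟩
  intro j k
  have hmem : ∀ k' : Fin (par j),
      e.symm ⟨j, k'⟩ ∈ (Finset.univ.filter fun i => w i = j) := by
    intro k'
    simp only [Finset.mem_filter, Finset.mem_univ, true_and]
    show (e (e.symm ⟨j, k'⟩)).j = j
    rw [e.apply_symm_apply]
  have hmono : StrictMono (fun k' : Fin (par j) => e.symm ⟨j, k'⟩) := by
    intro k1 k2 hk12
    apply e.symm.lt_iff_lt.mpr
    rw [hlt]
    have h7 := hF j (le_of_lt hk12)
    rcases eq_or_lt_of_le h7 with h8 | h8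
    · exact Or.inr ⟨h8.symm, Or.inr ⟨rfl, hk12⟩⟩
    · exact Or.inl h8
  have huniq := Finset.orderEmbOfFin_unique (hw j) hmem hmono
  rw [← congrFun huniq k]
  show F (e (e.symm ⟨j, k⟩)).j (e (e.symm ⟨j, k⟩)).k = F j k
  rw [e.apply_symm_apply]

end S2

noncomputable section S3
variable {m : ℕ}

lemma merge_uniq (par : Fin m → ℕ) {p : ℕ} (hp : p = ∑ j, par j)
    (w w' : Fin p → Fin m)
    (hw : ∀ j, (Finset.univ.filter fun i => w i = j).card = par j)
    (hw' : ∀ j, (Finset.univ.filter fun i => w' i = j).card = par j)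
    (h h' : Fin p → ℕ)
    (hc : Compat (fun k => ((w k : ℕ))) h) (hc' : Compat (fun k => ((w' k : ℕ))) h')
    (heq : ∀ j k, h ((Finset.univ.filter fun i => w i = j).orderEmbOfFin (hw j) k)
                = h' ((Finset.univ.filter fun i => w' i = j).orderEmbOfFin (hw' j) k)) :
    w = w' ∧ h = h' := by
  set F : ∀ j : Fin m, Fin (par j) → ℕ :=
    fun j k => h ((Finset.univ.filter fun i => w i = j).orderEmbOfFin (hw j) k) with hFdef
  letI : LinearOrder (TT par) := LinearOrder.lift' (keyF par F) (keyF_inj par F)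
  have hlt : ∀ x y : TT par, x < y ↔
      (F y.j y.k < F x.j x.k ∨ (F x.j x.k = F y.j y.k ∧
        (((x.j : ℕ) < (y.j : ℕ)) ∨ (x.j = y.j ∧ (x.k : ℕ) < (y.k : ℕ))))) := by
    intro x y
    show keyF par F x < keyF par F y ↔ _
    rw [keyF, keyF, Prod.Lex.lt_iff, Prod.Lex.lt_iff]
    simp only [ofLex_toLex, OrderDual.toDual_lt_toDual, OrderDual.toDual_inj, Fin.lt_def]
  set e := monoEquivOfFin (TT par) (cardTT par hp) with he
  have key : ∀ (v : Fin p → Fin m)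
      (hv : ∀ j, (Finset.univ.filter fun i => v i = j).card = par j)
      (g : Fin p → ℕ), Compat (fun k => ((v k : ℕ))) g →
      (∀ j k, g ((Finset.univ.filter fun i => v i = j).orderEmbOfFin (hv j) k) = F j k) →
      ∀ i, v i = (e i).j ∧ g i = F (e i).j (e i).k := by
    intro v hv g hcv hgF
    set rk : Fin p → ℕ :=
      fun i => ((Finset.univ.filter fun i' => v i' = v i).filter (· < i)).card with hrk
    have hmem : ∀ i : Fin p, i ∈ (Finset.univ.filter fun i' => v i' = v i) :=
      fun i => by simp
    have hrklt : ∀ i, rk i < par (v i) := fun i => rank_lt (hv (v i)) (hmem i)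
    set E : Fin p → TT par := fun i => ⟨v i, ⟨rk i, hrklt i⟩⟩ with hE
    have hEemb : ∀ i : Fin p,
        (Finset.univ.filter fun i' => v i' = v i).orderEmbOfFin (hv (v i))
          ⟨rk i, hrklt i⟩ = i :=
      fun i => orderEmbOfFin_rank (hv (v i)) (hmem i) _
    have hval : ∀ i, F (E i).j (E i).k = g i := by
      intro i
      show F (v i) ⟨rk i, hrklt i⟩ = g i
      rw [← hgF (v i) ⟨rk i, hrklt i⟩, hEemb i]
    have hEmono : StrictMono E := by
      cases p with
      | zero => intro a; exact absurd a.2 (by omega)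
      | succ n =>
        rw [Fin.strictMono_iff_lt_succ]
        intro i
        have hk1 : (i : ℕ) + 1 < n + 1 := by omega
        have hadj := hcv (i : ℕ) hk1
        have hcs : (⟨(i : ℕ), by omega⟩ : Fin (n + 1)) = i.castSucc := Fin.ext (by simp)
        have hsc : (⟨(i : ℕ) + 1, hk1⟩ : Fin (n + 1)) = i.succ := Fin.ext (by simp)
        rw [hcs, hsc] at hadj
        rw [hlt]
        have hgle : g i.succ ≤ g i.castSucc := by
          by_cases hd : isDes (fun k => ((v k : ℕ))) (i : ℕ) <;>
            simp only [hd, if_true, if_false] at hadj <;> omega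
        rcases lt_or_eq_of_le hgle with hlt2 | heq2
        · left; rw [hval, hval]; exact hlt2
        · have hnd : ¬ isDes (fun k => ((v k : ℕ))) (i : ℕ) := by
            intro hd
            rw [if_pos hd] at hadj; omega
          have hvle : (v i.castSucc : ℕ) ≤ (v i.succ : ℕ) := by
            by_contra hcon
            apply hnd
            refine ⟨hk1, ?_⟩
            rw [Fx_eq _ hk1, Fx_eq _ (show (i : ℕ) < n + 1 by omega)]
            rw [show (⟨(i : ℕ) + 1, hk1⟩ : Fin (n + 1)) = i.succ from Fin.ext (by simp),
              show (⟨(i : ℕ), by omega⟩ : Fin (n + 1)) = i.castSucc from Fin.ext (by simp)]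
            omega
          right
          refine ⟨by rw [hval, hval]; exact heq2.symm, ?_⟩
          rcases lt_or_eq_of_le hvle with hv2 | hv2
          · left; exact hv2
          · right
            have hvv : v i.castSucc = v i.succ := Fin.ext hv2
            refine ⟨hvv, ?_⟩
            show rk i.castSucc < rk i.succ
            have hset : (Finset.univ.filter fun i' => v i' = v i.succ)
                = (Finset.univ.filter fun i' => v i' = v i.castSucc) := by rw [hvv]
            have h10 : rk i.succ
                = ((Finset.univ.filter fun i' => v i' = v i.castSucc).filter
                    (· < i.succ)).card := by
              simp only [hrk]; rw [hset]
            have h11 : rk i.castSucc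
                = ((Finset.univ.filter fun i' => v i' = v i.castSucc).filter
                    (· < i.castSucc)).card := by simp only [hrk]
            rw [h10, h11]
            exact rank_strict (hmem i.castSucc) Fin.castSucc_lt_succ
    have hEinj : Function.Injective E := by
      intro a b hab
      have hj : v a = v b := congrArg TT.j hab
      have hk2 : rk a = rk b := by
        simpa using congrArg (fun t : TT par => (t.k : ℕ)) hab
      rcases lt_trichotomy a b with hlt3 | heq3 | hlt3
      · exfalso
        have h11 := rank_strict (s := Finset.univ.filter fun i' => v i' = v a)
          (hmem a) hlt3
        have hset : (Finset.univ.filter fun i' => v i' = v b)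
            = (Finset.univ.filter fun i' => v i' = v a) := by rw [hj]
        have h12 : rk b
            = ((Finset.univ.filter fun i' => v i' = v a).filter (· < b)).card := by
          simp only [hrk]; rw [hset]
        have h13 : rk a
            = ((Finset.univ.filter fun i' => v i' = v a).filter (· < a)).card := by
          simp only [hrk]
        omega
      · exact heq3
      · exfalso
        have h11 := rank_strict (s := Finset.univ.filter fun i' => v i' = v b)
          (hmem b) hlt3
        have hset : (Finset.univ.filter fun i' => v i' = v a)
            = (Finset.univ.filter fun i' => v i' = v b) := by rw [hj]
        have h12 : rk a
            = ((Finset.univ.filter fun i' => v i' = v b).filter (· < a)).card := by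
          simp only [hrk]; rw [hset]
        have h13 : rk b
            = ((Finset.univ.filter fun i' => v i' = v b).filter (· < b)).card := by
          simp only [hrk]
        omega
    have hEbij : Function.Bijective E :=
      (Fintype.bijective_iff_injective_and_card E).mpr
        ⟨hEinj, by rw [Fintype.card_fin, cardTT par hp]⟩
    have hEe : E = ⇑e := by
      have h9 : Set.range E = Set.range ⇑e := by
        rw [hEbij.2.range_eq, e.surjective.range_eq]
      haveI : WellFoundedLT (Fin p) := inferInstance
      exact (StrictMono.range_inj hEmono e.strictMono).mp h9
    intro i
    refine ⟨?_, ?_⟩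
    · show v i = (e i).j
      rw [← hEe]
    · rw [← hEe, hval]
  have h1 := key w hw h hc (fun j k => rfl)
  have h2 := key w' hw' h' hc' (fun j k => (heq j k).symm)
  constructor
  · funext i; rw [(h1 i).1, (h2 i).1]
  · funext i; rw [(h1 i).2, (h2 i).2]

end S3


def TupW {m : ℕ} (par : Fin m → ℕ) : Type :=
  {F : ∀ j, Fin (par j) → ℕ // ∀ j, Antitone (F j)}

def twt {m : ℕ} {par : Fin m → ℕ} (F : TupW par) : ℕ := ∑ j, ∑ k, F.1 j k

lemma finite_tup {m : ℕ} (par : Fin m → ℕ) (N : ℕ) :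
    Finite {F : TupW par // twt F = N} := by
  apply finite_fiber twt (fun F => fun t : (j : Fin m) × Fin (par j) => F.1 t.1 t.2)
  · intro F G hFG
    apply Subtype.ext
    funext j k
    exact congrFun hFG ⟨j, k⟩
  · intro F t
    calc F.1 t.1 t.2 ≤ ∑ k, F.1 t.1 k :=
          Finset.single_le_sum (fun k _ => Nat.zero_le _) (Finset.mem_univ t.2)
      _ ≤ twt F := Finset.single_le_sum (f := fun j => ∑ k, F.1 j k)
          (fun j _ => Nat.zero_le _) (Finset.mem_univ t.1)

/-- splitting of antitone tuples at the last index. -/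
def tupSnoc {m : ℕ} (par : Fin (m + 1) → ℕ) :
    TupW (fun j : Fin m => par j.castSucc) × Anti (par (Fin.last m)) ≃ TupW par where
  toFun x := ⟨fun j => Fin.lastCases (motive := fun j => Fin (par j) → ℕ) x.2.1
      (fun jj => x.1.1 jj) j, by
    intro j
    refine Fin.lastCases ?_ ?_ j
    · simpa using x.2.2
    · intro jj
      simpa using x.1.2 jj⟩
  invFun F := (⟨fun jj => F.1 jj.castSucc, fun jj => F.2 jj.castSucc⟩,
    ⟨F.1 (Fin.last m), F.2 (Fin.last m)⟩)
  left_inv x := by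
    obtain ⟨⟨G, hG⟩, ⟨a, ha⟩⟩ := x
    refine Prod.ext (Subtype.ext ?_) (Subtype.ext ?_)
    · funext jj
      simp
    · simp
  right_inv F := by
    apply Subtype.ext
    funext j
    refine Fin.lastCases ?_ ?_ j
    · simp
    · intro jj; simp

lemma twt_tupSnoc {m : ℕ} (par : Fin (m + 1) → ℕ)
    (x : TupW (fun j : Fin m => par j.castSucc) × Anti (par (Fin.last m))) :
    twt ((tupSnoc par) x) = twt x.1 + awt x.2 := by
  obtain ⟨⟨G, hG⟩, ⟨a, ha⟩⟩ := x
  show ∑ j : Fin (m + 1), ∑ k, ((tupSnoc par) (⟨G, hG⟩, ⟨a, ha⟩)).1 j k = _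
  rw [Fin.sum_univ_castSucc]
  have h1 : ∀ jj : Fin m, ((tupSnoc par) (⟨G, hG⟩, ⟨a, ha⟩)).1 jj.castSucc = G jj := by
    intro jj
    show (Fin.lastCases (motive := fun j => Fin (par j) → ℕ) a (fun jj => G jj)
      jj.castSucc) = G jj
    simp
  have h2 : ((tupSnoc par) (⟨G, hG⟩, ⟨a, ha⟩)).1 (Fin.last m) = a := by
    show (Fin.lastCases (motive := fun j => Fin (par j) → ℕ) a (fun jj => G jj)
      (Fin.last m)) = a
    simp
  simp only [h1, h2]
  rfl

lemma coeff_prod_Ds : ∀ (m : ℕ) (par : Fin m → ℕ) (N : ℕ),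
    PowerSeries.coeff N (∏ j, Ds (par j)) = Nat.card {F : TupW par // twt F = N} := by
  intro m
  induction m with
  | zero =>
    intro par N
    rw [Finset.univ_eq_empty, Finset.prod_empty]
    rcases Nat.eq_zero_or_pos N with rfl | hN
    · letI : Unique {F : TupW par // twt F = 0} :=
        ⟨⟨⟨⟨fun j => j.elim0, fun j => j.elim0⟩, by simp [twt]⟩⟩, by
          rintro ⟨⟨F, hF⟩, h⟩
          apply Subtype.ext; apply Subtype.ext
          funext j; exact j.elim0⟩
      simp [Nat.card_unique]
    · haveI : IsEmpty {F : TupW par // twt F = N} := ⟨by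
        rintro ⟨F, hFN⟩
        rw [twt] at hFN
        simp at hFN
        omega⟩
      simp [Nat.card_of_isEmpty, hN.ne']
  | succ m ih =>
    intro par N
    rw [Fin.prod_univ_castSucc,
      coeff_mul_count _ _ twt awt (finite_tup _) (finite_anti _)
        (ih (fun j => par j.castSucc)) (coeff_Ds (par (Fin.last m)))]
    norm_cast
    apply Nat.card_congr
    exact Equiv.subtypeEquiv (tupSnoc par) (fun x => by rw [twt_tupSnoc])


lemma finite_cpt (f : Fin p → ℕ) (N : ℕ) : Finite {x : CptT f // cwt x = N} :=
  finite_fiber cwt (fun x => x.1) (fun a b h => Subtype.ext h)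
    (fun a x => Finset.single_le_sum (f := a.1) (fun i _ => Nat.zero_le _)
      (Finset.mem_univ x)) N

lemma sum_emb {m : ℕ} {par : Fin m → ℕ} (w : Fin p → Fin m)
    (hw : ∀ j, (Finset.univ.filter fun i => w i = j).card = par j) (h : Fin p → ℕ) :
    ∑ j, ∑ k, h ((Finset.univ.filter fun i => w i = j).orderEmbOfFin (hw j) k)
      = ∑ i, h i := by
  have h1 : ∀ j, ∑ k, h ((Finset.univ.filter fun i => w i = j).orderEmbOfFin (hw j) k)
      = ∑ i ∈ Finset.univ.filter (fun i => w i = j), h i := by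
    intro j
    have himg : (Finset.univ.image ((Finset.univ.filter fun i => w i = j).orderEmbOfFin
        (hw j))) = Finset.univ.filter (fun i => w i = j) := by
      apply Finset.coe_injective
      rw [Finset.coe_image, Finset.coe_univ, Set.image_univ, Finset.range_orderEmbOfFin]
    conv_rhs => rw [← himg]
    exact (Finset.sum_image (fun x _ y _ hxy =>
      ((Finset.univ.filter fun i => w i = j).orderEmbOfFin (hw j)).injective hxy)).symm
  rw [Finset.sum_congr rfl (fun j _ => h1 j)]
  exact Finset.sum_fiberwise Finset.univ w h

lemma star (m : ℕ) (par : Fin m → ℕ) {p : ℕ} (hp : p = ∑ j, par j) :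
    (∑ w ∈ Finset.univ.filter (fun w : Fin p → Fin m =>
        ∀ j : Fin m, (Finset.univ.filter fun i : Fin p => w i = j).card = par j),
      (PowerSeries.X : PowerSeries ℤ) ^ maj (fun k => ((w k : ℕ)))) * Ds p
    = ∏ j, Ds (par j) := by
  ext N
  rw [Finset.sum_mul, map_sum, coeff_prod_Ds]
  rw [Finset.sum_congr rfl (fun w _ => coeff_Xmaj_mul_Ds (fun k => ((w k : ℕ))) N)]
  set A := Finset.univ.filter (fun w : Fin p → Fin m =>
      ∀ j : Fin m, (Finset.univ.filter fun i : Fin p => w i = j).card = par j) with hA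
  have hmemA : ∀ z : {w // w ∈ A},
      ∀ j : Fin m, (Finset.univ.filter fun i : Fin p => z.1 i = j).card = par j := by
    intro z
    exact (Finset.mem_filter.mp z.2).2
  have hsub := (Finset.sum_coe_sort A
    (fun w => (Nat.card {x : CptT (fun k => ((w k : ℕ))) // cwt x = N} : ℤ))).symm
  rw [hsub]
  rw [← Nat.cast_sum]
  congr 1
  haveI inst : ∀ w : {w // w ∈ A},
      Finite {x : CptT (fun k => ((w.1 k : ℕ))) // cwt x = N} :=
    fun w => finite_cpt _ N
  rw [← natcard_sigma (fun w : {w // w ∈ A} =>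
    {x : CptT (fun k => ((w.1 k : ℕ))) // cwt x = N})]
  apply Nat.card_congr
  refine Equiv.ofBijective (fun z =>
    ⟨⟨fun j k => z.2.1.1 ((Finset.univ.filter fun i => z.1.1 i = j).orderEmbOfFin
        (hmemA z.1 j) k),
      fun j k1 k2 hk12 => (compat_antitone z.2.1.2)
        (((Finset.univ.filter fun i => z.1.1 i = j).orderEmbOfFin
          (hmemA z.1 j)).monotone hk12)⟩, by
      show (∑ j, ∑ k, z.2.1.1 _) = N
      rw [sum_emb z.1.1 (hmemA z.1) z.2.1.1]
      exact z.2.2⟩) ⟨?_, ?_⟩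
  · rintro ⟨⟨w1, hw1⟩, ⟨⟨h1, hc1⟩, hs1⟩⟩ ⟨⟨w2, hw2⟩, ⟨⟨h2, hc2⟩, hs2⟩⟩ hPhi
    have h3 := congrArg (fun t : {F : TupW par // twt F = N} => t.1.1) hPhi
    have hF : ∀ j k, h1 ((Finset.univ.filter fun i => w1 i = j).orderEmbOfFin
          (hmemA ⟨w1, hw1⟩ j) k)
        = h2 ((Finset.univ.filter fun i => w2 i = j).orderEmbOfFin
          (hmemA ⟨w2, hw2⟩ j) k) :=
      fun j k => congrFun (congrFun h3 j) k
    obtain ⟨hww, hhh⟩ := merge_uniq par hp w1 w2 (hmemA ⟨w1, hw1⟩) (hmemA ⟨w2, hw2⟩)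
      h1 h2 hc1 hc2 hF
    subst hww; subst hhh
    rfl
  · rintro ⟨⟨F, hF⟩, hN⟩
    obtain ⟨w, hw, h, hc, hPhi⟩ := merge_surj par hp F hF
    have hwA : w ∈ A := by
      rw [hA, Finset.mem_filter]
      exact ⟨Finset.mem_univ _, hw⟩
    refine ⟨⟨⟨w, hwA⟩, ⟨⟨h, hc⟩, ?_⟩⟩, ?_⟩
    · show (∑ i, h i) = N
      rw [← sum_emb w (hmemA ⟨w, hwA⟩) h]
      calc ∑ j, ∑ k, h ((Finset.univ.filter fun i => w i = j).orderEmbOfFin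
            (hmemA ⟨w, hwA⟩ j) k)
          = ∑ j, ∑ k, F j k := by
            refine Finset.sum_congr rfl (fun j _ => Finset.sum_congr rfl
              (fun k _ => ?_))
            rw [show ((Finset.univ.filter fun i => w i = j).orderEmbOfFin
                (hmemA ⟨w, hwA⟩ j)) k = ((Finset.univ.filter fun i => w i = j).orderEmbOfFin
                (hw j)) k from rfl]
            exact hPhi j k
        _ = N := hN
    · apply Subtype.ext
      apply Subtype.ext
      funext j k
      exact hPhi j k

/-- **MacMahon** : the generating function by major index of the multiset
permutations of `{1^{p₁},…,m^{p_m}}` is the `q`-multinomial coefficient: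
`((q)_{p₁} ⋯ (q)_{p_m}) ⬝ ∑_w q^{maj w} = (q)_p` where `p = p₁ + ⋯ + p_m`. -/
theorem macmahon_maj_multiset (m : ℕ) (hm : 0 < m) (par : Fin m → ℕ)
    (hpar : ∀ j, 0 < par j) (p : ℕ) (hp : p = ∑ j, par j) :
    (∏ j, qpoch (par j)) *
      (∑ w ∈ Finset.univ.filter (fun w : Fin p → Fin m =>
          ∀ j : Fin m, (Finset.univ.filter fun i : Fin p => w i = j).card = par j),
        Polynomial.X ^ ((desSet p fun k => ((w k : ℕ))).sum id)) = qpoch p := by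
  rw [← Polynomial.coe_inj, Polynomial.coe_mul]
  have h1 : ((∏ j, qpoch (par j) : Polynomial ℤ) : PowerSeries ℤ)
      = ∏ j, (qpoch (par j) : PowerSeries ℤ) := by
    rw [← Polynomial.coeToPowerSeries.ringHom_apply, map_prod]
    simp [Polynomial.coeToPowerSeries.ringHom_apply]
  have h2 : ((∑ w ∈ Finset.univ.filter (fun w : Fin p → Fin m =>
        ∀ j : Fin m, (Finset.univ.filter fun i : Fin p => w i = j).card = par j),
        Polynomial.X ^ ((desSet p fun k => ((w k : ℕ))).sum id) : Polynomial ℤ)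
        : PowerSeries ℤ)
      = ∑ w ∈ Finset.univ.filter (fun w : Fin p → Fin m =>
          ∀ j : Fin m, (Finset.univ.filter fun i : Fin p => w i = j).card = par j),
        (PowerSeries.X : PowerSeries ℤ) ^ maj (fun k => ((w k : ℕ))) := by
    rw [← Polynomial.coeToPowerSeries.ringHom_apply, map_sum]
    refine Finset.sum_congr rfl (fun w _ => ?_)
    rw [map_pow, Polynomial.coeToPowerSeries.ringHom_apply, Polynomial.coe_X,
      sum_desSet]
  rw [h1, h2]
  have h3 := star m par hp
  set S := ∑ w ∈ Finset.univ.filter (fun w : Fin p → Fin m =>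
      ∀ j : Fin m, (Finset.univ.filter fun i : Fin p => w i = j).card = par j),
    (PowerSeries.X : PowerSeries ℤ) ^ maj (fun k => ((w k : ℕ))) with hS
  calc (∏ j, (qpoch (par j) : PowerSeries ℤ)) * S
      = ((∏ j, (qpoch (par j) : PowerSeries ℤ)) * S)
        * ((qpoch p : PowerSeries ℤ) * Ds p) := by
        rw [qpoch_coe_mul_Ds, mul_one]
    _ = (qpoch p : PowerSeries ℤ)
        * ((∏ j, (qpoch (par j) : PowerSeries ℤ)) * (S * Ds p)) := by ring
    _ = (qpoch p : PowerSeries ℤ)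
        * ((∏ j, (qpoch (par j) : PowerSeries ℤ)) * ∏ j, Ds (par j)) := by rw [h3]
    _ = (qpoch p : PowerSeries ℤ)
        * ∏ j, ((qpoch (par j) : PowerSeries ℤ) * Ds (par j)) := by
        rw [Finset.prod_mul_distrib]
    _ = (qpoch p : PowerSeries ℤ) * ∏ j, (1 : PowerSeries ℤ) := by
        rw [Finset.prod_congr rfl (fun j _ => qpoch_coe_mul_Ds (par j))]
    _ = (qpoch p : PowerSeries ℤ) := by simp
end

section
/- (Stanley's chain polytope theorem, lattice-point form.) Let (S, ⪯) be a finite poset. For every natural number m, the number of functions f : S → ℕ such that ∑_{x ∈ C} f(x) ≤ m for every nonempty chain C of S equals the number of functions g : S → {0, 1, …, m} such that g(x) ≥ g(y) whenever x ⪯ y. (Equivalently, the chain polytope and the order polytope of S contain equally many lattice points in each dilation, so they have the same Ehrhart polynomial.) -/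
open scoped Classical

section Aux

variable {S : Type} [Fintype S] [PartialOrder S]

private noncomputable def upset (x : S) : Finset S := Finset.univ.filter (x < ·)

private lemma mem_upset {x y : S} : y ∈ upset x ↔ x < y := by simp [upset]

private lemma upset_card_lt {x y : S} (h : x < y) :
    (upset y).card < (upset x).card := by
  apply Finset.card_lt_card
  have hsub : upset y ⊆ upset x := fun z hz => mem_upset.mpr (h.trans (mem_upset.mp hz))
  exact (Finset.ssubset_iff_of_subset hsub).mpr
    ⟨y, mem_upset.mpr h, fun hy => lt_irrefl y (mem_upset.mp hy)⟩

private noncomputable def Gm (f : S → ℕ) (x : S) : ℕ :=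
  f x + (upset x).attach.sup (fun y => Gm f y.1)
termination_by (upset x).card
decreasing_by exact upset_card_lt (mem_upset.mp y.2)

private lemma Gm_eq (f : S → ℕ) (x : S) :
    Gm f x = f x + (upset x).sup (Gm f) := by
  rw [Gm, Finset.sup_attach]

private noncomputable def Fm (g : S → ℕ) (x : S) : ℕ := g x - (upset x).sup g

/-- antitonicity of `Gm f` -/
private lemma Gm_antitone (f : S → ℕ) {x y : S} (h : x ≤ y) :
    Gm f y ≤ Gm f x := by
  rcases eq_or_lt_of_le h with rfl | h
  · exact le_rfl
  · calc Gm f y ≤ (upset x).sup (Gm f) := Finset.le_sup (mem_upset.mpr h)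
      _ ≤ f x + (upset x).sup (Gm f) := Nat.le_add_left _ _
      _ = Gm f x := (Gm_eq f x).symm

private lemma Fm_Gm (f : S → ℕ) : Fm (Gm f) = f := by
  funext x
  have h : (upset x).sup (Gm f) ≤ Gm f x := by
    rw [Gm_eq]; exact Nat.le_add_left _ _
  simp only [Fm]
  rw [Gm_eq]
  omega

private lemma sup_upset_le {g : S → ℕ} (hg : ∀ x y : S, x ≤ y → g y ≤ g x) (x : S) :
    (upset x).sup g ≤ g x :=
  Finset.sup_le fun y hy => hg x y (mem_upset.mp hy).le

private lemma Gm_Fm {g : S → ℕ} (hg : ∀ x y : S, x ≤ y → g y ≤ g x) :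
    Gm (Fm g) = g := by
  funext x
  suffices H : ∀ n (x : S), (upset x).card ≤ n → Gm (Fm g) x = g x from H _ x le_rfl
  clear x
  intro n
  induction n with
  | zero =>
    intro x hx
    have hempty : upset x = ∅ := Finset.card_eq_zero.mp (Nat.le_zero.mp hx)
    rw [Gm_eq, hempty]
    simp [Fm, hempty]
  | succ n ih =>
    intro x hx
    rw [Gm_eq]
    have hsup : (upset x).sup (Gm (Fm g)) = (upset x).sup g := by
      apply Finset.sup_congr rfl
      intro y hy
      exact ih y (by
        have := upset_card_lt (mem_upset.mp hy)
        omega)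
    rw [hsup]
    simp only [Fm]
    have := sup_upset_le hg x
    omega

/-- every chain lying above `x` has sum at most `Gm f x` -/
private lemma sum_chain_le_Gm (f : S → ℕ) :
    ∀ (C : Finset S), C.Nonempty → IsChain (· ≤ ·) (C : Set S) →
      ∀ x : S, (∀ t ∈ C, x ≤ t) → (∑ t ∈ C, f t) ≤ Gm f x := by
  suffices H : ∀ n (C : Finset S), C.card ≤ n → C.Nonempty →
      IsChain (· ≤ ·) (C : Set S) → ∀ x : S, (∀ t ∈ C, x ≤ t) →
      (∑ t ∈ C, f t) ≤ Gm f x from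
    fun C hC hchain x hx => H C.card C le_rfl hC hchain x hx
  intro n
  induction n with
  | zero =>
    intro C hcard hC
    simp [Finset.card_eq_zero.mp (Nat.le_zero.mp hcard)] at hC
  | succ n ih =>
    intro C hcard hC hchain x hx
    obtain ⟨y, hyC, hymin⟩ := Finset.exists_minimal hC
    have hy_le : ∀ t ∈ C, y ≤ t := by
      intro t ht
      rcases eq_or_ne t y with rfl | hne
      · exact le_rfl
      · rcases hchain hyC ht (Ne.symm hne) with h | h
        · exact h
        · exact hymin ht h
    have hsum : ∑ t ∈ C, f t = f y + ∑ t ∈ C.erase y, f t :=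
      (Finset.add_sum_erase C f hyC).symm
    have key : ∑ t ∈ C.erase y, f t ≤ (upset y).sup (Gm f) := by
      rcases Finset.eq_empty_or_nonempty (C.erase y) with he | hne
      · simp [he]
      · obtain ⟨z, hz⟩ := hne
        have hz_mem : z ∈ C := Finset.mem_of_mem_erase hz
        have hchain' : IsChain (· ≤ ·) ((C.erase y : Finset S) : Set S) :=
          hchain.mono (by intro t ht; exact Finset.mem_of_mem_erase ht)
        -- erase elements are > y
        obtain ⟨z, hzE, hzmin⟩ := Finset.exists_minimal ⟨z, hz⟩
        have hz_le : ∀ t ∈ C.erase y, z ≤ t := by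
          intro t ht
          rcases eq_or_ne t z with rfl | hne2
          · exact le_rfl
          · rcases hchain' hzE ht (Ne.symm hne2) with h | h
            · exact h
            · exact hzmin ht h
        have hcard' : (C.erase y).card ≤ n := by
          have := Finset.card_erase_of_mem hyC
          omega
        have h1 : ∑ t ∈ C.erase y, f t ≤ Gm f z :=
          ih (C.erase y) hcard' ⟨z, hzE⟩ hchain' z hz_le
        have hyz : y < z :=
          lt_of_le_of_ne (hy_le z (Finset.mem_of_mem_erase hzE))
            (Ne.symm (Finset.ne_of_mem_erase hzE))
        exact h1.trans (Finset.le_sup (mem_upset.mpr hyz))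
    calc ∑ t ∈ C, f t = f y + ∑ t ∈ C.erase y, f t := hsum
      _ ≤ f y + (upset y).sup (Gm f) := by omega
      _ = Gm f y := (Gm_eq f y).symm
      _ ≤ Gm f x := Gm_antitone f (hx y hyC)

/-- there is a chain above `x` realising `Gm f x` -/
private lemma exists_chain_Gm (f : S → ℕ) (x : S) :
    ∃ C : Finset S, C.Nonempty ∧ IsChain (· ≤ ·) (C : Set S) ∧
      (∀ t ∈ C, x ≤ t) ∧ (∑ t ∈ C, f t) = Gm f x := by
  suffices H : ∀ n (x : S), (upset x).card ≤ n →
      ∃ C : Finset S, C.Nonempty ∧ IsChain (· ≤ ·) (C : Set S) ∧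
      (∀ t ∈ C, x ≤ t) ∧ (∑ t ∈ C, f t) = Gm f x from H _ x le_rfl
  intro n
  induction n with
  | zero =>
    intro x hx
    have hempty : upset x = ∅ := Finset.card_eq_zero.mp (Nat.le_zero.mp hx)
    refine ⟨{x}, Finset.singleton_nonempty x, ?_, by simp, ?_⟩
    · simp [IsChain]
    · rw [Gm_eq, hempty]; simp
  | succ n ih =>
    intro x hx
    rcases Finset.eq_empty_or_nonempty (upset x) with he | hne
    · refine ⟨{x}, Finset.singleton_nonempty x, ?_, by simp, ?_⟩
      · simp [IsChain]
      · rw [Gm_eq, he]; simp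
    · obtain ⟨y, hy, hsup⟩ := Finset.exists_mem_eq_sup _ hne (Gm f)
      have hxy : x < y := mem_upset.mp hy
      obtain ⟨C, hCne, hCchain, hCle, hCsum⟩ := ih y (by
        have := upset_card_lt hxy
        omega)
      have hxC : x ∉ C := fun hmem => absurd (hCle x hmem) (not_le_of_gt hxy)
      refine ⟨insert x C, Finset.insert_nonempty x C, ?_, ?_, ?_⟩
      · rw [Finset.coe_insert]
        exact hCchain.insert fun t ht _ => Or.inl ((hxy.le.trans (hCle t ht)))
      · intro t ht
        rcases Finset.mem_insert.mp ht with rfl | ht'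
        · exact le_rfl
        · exact hxy.le.trans (hCle t ht')
      · rw [Finset.sum_insert hxC, hCsum, Gm_eq f x, hsup]

end Aux

/-- **Stanley's chain polytope theorem (lattice-point form)** : for a finite poset
`S` and every `m`, the number of lattice points of the `m`-th dilation of the
chain polytope (functions `f : S → ℕ` with `∑_{x ∈ C} f x ≤ m` for every nonempty
chain `C`) equals the number of lattice points of the `m`-th dilation of the order
polytope (order-reversing functions `g : S → {0,…,m}`). -/
theorem chain_polytope_order_polytope (S : Type) [Fintype S] [PartialOrder S]
    (m : ℕ) :
    Set.ncard {f : S → ℕ |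
        ∀ C : Finset S, C.Nonempty → IsChain (· ≤ ·) (C : Set S) →
          (∑ x ∈ C, f x) ≤ m} =
    Set.ncard {g : S → ℕ |
        (∀ x, g x ≤ m) ∧ ∀ x y : S, x ≤ y → g y ≤ g x} := by
  set A := {f : S → ℕ |
        ∀ C : Finset S, C.Nonempty → IsChain (· ≤ ·) (C : Set S) →
          (∑ x ∈ C, f x) ≤ m} with hA
  set B := {g : S → ℕ |
        (∀ x, g x ≤ m) ∧ ∀ x y : S, x ≤ y → g y ≤ g x} with hB
  have key : ∀ f ∈ A, Gm f ∈ B := by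
    intro f hf
    constructor
    · intro x
      obtain ⟨C, hCne, hCchain, _, hCsum⟩ := exists_chain_Gm f x
      rw [← hCsum]
      exact hf C hCne hCchain
    · intro x y hxy
      exact Gm_antitone f hxy
  have keyinv : ∀ g ∈ B, Fm g ∈ A ∧ Gm (Fm g) = g := by
    intro g hg
    have hGF := Gm_Fm hg.2
    refine ⟨?_, hGF⟩
    intro C hCne hCchain
    obtain ⟨y, hyC, hymin⟩ := Finset.exists_minimal hCne
    have hy_le : ∀ t ∈ C, y ≤ t := by
      intro t ht
      rcases eq_or_ne t y with rfl | hne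
      · exact le_rfl
      · rcases hCchain hyC ht (Ne.symm hne) with h | h
        · exact h
        · exact hymin ht h
    calc ∑ x ∈ C, Fm g x ≤ Gm (Fm g) y :=
          sum_chain_le_Gm (Fm g) C hCne hCchain y hy_le
      _ = g y := by rw [hGF]
      _ ≤ m := hg.1 y
  have : Nat.card A = Nat.card B := by
    apply Nat.card_congr
    refine Equiv.ofBijective (fun f => ⟨Gm f.1, key f.1 f.2⟩) ⟨?_, ?_⟩
    · rintro ⟨f, hf⟩ ⟨f', hf'⟩ h
      simp only [Subtype.mk.injEq] at h ⊢
      calc f = Fm (Gm f) := (Fm_Gm f).symm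
        _ = Fm (Gm f') := by rw [h]
        _ = f' := Fm_Gm f'
    · rintro ⟨g, hg⟩
      obtain ⟨hFA, hGF⟩ := keyinv g hg
      exact ⟨⟨Fm g, hFA⟩, Subtype.ext hGF⟩
  simpa [Nat.card_coe_set_eq] using this
end

section
/- (Stembridge's fundamental theorem of enriched P-partitions.) Every enriched P-partition σ is an enriched π-partition for exactly one linear extension π ∈ L(P); moreover, for every π ∈ L(P), every enriched π-partition is an enriched P-partition. Hence the set of enriched P-partitions is the disjoint union over π ∈ L(P) of the sets of enriched π-partitions. -/
open scoped Classical

/-- The total order `⊴` on the nonzero integers: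
`-1 ⊴ +1 ⊴ -2 ⊴ +2 ⊴ ⋯`, i.e. `a ⊴ b` iff `|a| < |b|`, or `|a| = |b|` and `a ≤ b`. -/
def enrLE (a b : ℤ) : Prop := a.natAbs < b.natAbs ∨ (a.natAbs = b.natAbs ∧ a ≤ b)

/-- `π` is a linear extension of `P`. -/
def IsLinExt (p : ℕ) (P : PartialOrder (Fin p)) (π : Equiv.Perm (Fin p)) : Prop :=
  ∀ i j : Fin p, P.lt (π i) (π j) → i < j

/-- An enriched `P`-partition: a map `σ : [p] → ℤ∖{0}` with, for all `i ≺ j`: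
`σ j ⊴ σ i`; if `σ i = σ j > 0` then `i < j`; if `σ i = σ j < 0` then `i > j`. -/
def IsEnrichedPPartition (p : ℕ) (P : PartialOrder (Fin p)) (σ : Fin p → ℤ) : Prop :=
  (∀ i, σ i ≠ 0) ∧
  ∀ i j : Fin p, P.lt i j →
    enrLE (σ j) (σ i) ∧ (σ i = σ j → 0 < σ i → i < j) ∧ (σ i = σ j → σ i < 0 → j < i)

/-- An enriched `π`-partition for the linear extension `π`: an enriched partition
for the total order `π 1 ≺' π 2 ≺' ⋯ ≺' π p` with the same labels. -/
def IsEnrichedPiPartition (p : ℕ) (π : Equiv.Perm (Fin p)) (σ : Fin p → ℤ) : Prop :=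
  (∀ i, σ i ≠ 0) ∧
  ∀ i k : Fin p, i < k →
    enrLE (σ (π k)) (σ (π i)) ∧
    (σ (π i) = σ (π k) → 0 < σ (π i) → π i < π k) ∧
    (σ (π i) = σ (π k) → σ (π i) < 0 → π k < π i)

private def K (a : ℤ) : ℤ := 2 * a.natAbs + (if 0 < a then 1 else 0)

private lemma enrLE_iff_K {a b : ℤ} : enrLE a b ↔ K a ≤ K b := by
  unfold enrLE K; split_ifs <;> omega

private lemma K_inj {a b : ℤ} (ha : a ≠ 0) (hb : b ≠ 0) (h : K a = K b) : a = b := by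
  unfold K at h; split_ifs at h <;> omega

private lemma enrLE_total (a b : ℤ) : enrLE a b ∨ enrLE b a := by unfold enrLE; omega

private lemma enrLE_refl (a : ℤ) : enrLE a a := Or.inr ⟨rfl, le_rfl⟩

private lemma key_lt {q c d ti tj : ℤ} (h0i : 0 ≤ ti) (h1i : ti < q) (h0j : 0 ≤ tj)
    (h1j : tj < q) : ti - q * c < tj - q * d ↔ d < c ∨ (c = d ∧ ti < tj) := by
  constructor
  · intro h
    rcases lt_trichotomy c d with hc | hc | hc
    · exfalso
      have h2 : q * (c + 1) ≤ q * d := by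
        apply mul_le_mul_of_nonneg_left (by omega) (by omega)
      nlinarith
    · exact Or.inr ⟨hc, by rw [hc] at h; linarith⟩
    · exact Or.inl hc
  · rintro (h | ⟨rfl, h⟩)
    · have h2 : q * (d + 1) ≤ q * c := by
        apply mul_le_mul_of_nonneg_left (by omega) (by omega)
      nlinarith
    · linarith

private def Nf (p : ℕ) (σ : Fin p → ℤ) (i : Fin p) : ℤ :=
  (if 0 < σ i then (i : ℤ) else (p : ℤ) - 1 - i) - ((p : ℤ) + 1) * K (σ i)

private lemma Nf_lt_iff (p : ℕ) (σ : Fin p → ℤ) (hσ : ∀ i, σ i ≠ 0) (i j : Fin p) :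
    Nf p σ i < Nf p σ j ↔
      (enrLE (σ j) (σ i) ∧ σ i ≠ σ j) ∨
      (σ i = σ j ∧ ((0 < σ i ∧ i < j) ∨ (σ i < 0 ∧ j < i))) := by
  have hi := i.isLt
  have hj := j.isLt
  rw [Nf, Nf, key_lt (q := (p : ℤ) + 1)
      (by split_ifs <;> omega) (by split_ifs <;> omega)
      (by split_ifs <;> omega) (by split_ifs <;> omega)]
  constructor
  · rintro (h | ⟨he, ht⟩)
    · refine Or.inl ⟨enrLE_iff_K.mpr (le_of_lt h), fun hc => ?_⟩
      rw [hc] at h; exact lt_irrefl _ h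
    · have he' : σ i = σ j := K_inj (hσ i) (hσ j) he
      refine Or.inr ⟨he', ?_⟩
      rcases (hσ i).lt_or_gt with hs | hs
      · right
        rw [if_neg (by omega), if_neg (by rw [← he']; omega)] at ht
        exact ⟨hs, by rw [Fin.lt_iff_val_lt_val]; omega⟩
      · left
        rw [if_pos hs, if_pos (by rw [← he']; omega)] at ht
        exact ⟨hs, by rw [Fin.lt_iff_val_lt_val]; omega⟩
  · rintro (⟨h, hne⟩ | ⟨he, (⟨hs, hlt⟩ | ⟨hs, hlt⟩)⟩)
    · refine Or.inl (lt_of_le_of_ne (enrLE_iff_K.mp h) ?_)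
      exact fun hc => hne (K_inj (hσ i) (hσ j) hc.symm)
    · refine Or.inr ⟨by rw [he], ?_⟩
      rw [if_pos hs, if_pos (by rw [← he]; omega)]
      rw [Fin.lt_iff_val_lt_val] at hlt; omega
    · refine Or.inr ⟨by rw [he], ?_⟩
      rw [if_neg (by omega), if_neg (by rw [← he]; omega)]
      rw [Fin.lt_iff_val_lt_val] at hlt; omega

private lemma Nf_inj (p : ℕ) (σ : Fin p → ℤ) (hσ : ∀ i, σ i ≠ 0) :
    Function.Injective (Nf p σ) := by
  intro i j h
  by_contra hne
  have key : Nf p σ i < Nf p σ j ∨ Nf p σ j < Nf p σ i := by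
    rw [Nf_lt_iff p σ hσ, Nf_lt_iff p σ hσ]
    by_cases he : σ i = σ j
    · have hij : i < j ∨ j < i := lt_or_gt_of_ne hne
      rcases (hσ i).lt_or_gt with hs | hs
      · rcases hij with hij | hij
        · exact Or.inr (Or.inr ⟨he.symm, Or.inr ⟨by omega, hij⟩⟩)
        · exact Or.inl (Or.inr ⟨he, Or.inr ⟨hs, hij⟩⟩)
      · rcases hij with hij | hij
        · exact Or.inl (Or.inr ⟨he, Or.inl ⟨hs, hij⟩⟩)
        · exact Or.inr (Or.inr ⟨he.symm, Or.inl ⟨by omega, hij⟩⟩)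
    · rcases enrLE_total (σ i) (σ j) with ht | ht
      · exact Or.inr (Or.inl ⟨ht, fun hc => he hc.symm⟩)
      · exact Or.inl (Or.inl ⟨ht, he⟩)
  rw [h] at key
  exact (lt_irrefl _) (key.elim id id)

private lemma pi_iff (p : ℕ) (π : Equiv.Perm (Fin p)) (σ : Fin p → ℤ) :
    IsEnrichedPiPartition p π σ ↔
      (∀ i, σ i ≠ 0) ∧ StrictMono (fun i => Nf p σ (π i)) := by
  constructor
  · rintro ⟨hσ, h⟩
    refine ⟨hσ, fun i k hik => ?_⟩
    obtain ⟨h1, h2, h3⟩ := h i k hik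
    rw [Nf_lt_iff p σ hσ]
    by_cases he : σ (π i) = σ (π k)
    · refine Or.inr ⟨he, ?_⟩
      rcases (hσ (π i)).lt_or_gt with hs | hs
      · exact Or.inr ⟨hs, h3 he hs⟩
      · exact Or.inl ⟨hs, h2 he hs⟩
    · exact Or.inl ⟨h1, he⟩
  · rintro ⟨hσ, h⟩
    refine ⟨hσ, fun i k hik => ?_⟩
    have := (Nf_lt_iff p σ hσ (π i) (π k)).mp (h hik)
    rcases this with ⟨h1, hne⟩ | ⟨he, (⟨hs, hlt⟩ | ⟨hs, hlt⟩)⟩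
    · exact ⟨h1, fun hc => absurd hc hne, fun hc => absurd hc hne⟩
    · exact ⟨he ▸ enrLE_refl _, fun _ _ => hlt, fun _ hneg => absurd hs (by omega)⟩
    · exact ⟨he ▸ enrLE_refl _, fun _ hpos => absurd hs (by omega), fun _ _ => hlt⟩


private lemma aux_exun (p : ℕ) (σ : Fin p → ℤ) (hσ : ∀ i, σ i ≠ 0)
    (R : Fin p → Fin p → Prop)
    (hPN : ∀ i j : Fin p, R i j → Nf p σ i < Nf p σ j) :
    ∃! π : Equiv.Perm (Fin p),
      (∀ i j : Fin p, R (π i) (π j) → i < j) ∧ IsEnrichedPiPartition p π σ := by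
  set π := Tuple.sort (Nf p σ) with hπdef
  have hmono : Monotone ((Nf p σ) ∘ π) := Tuple.monotone_sort (Nf p σ)
  have hsm : StrictMono (fun i => Nf p σ (π i)) :=
    hmono.strictMono_of_injective ((Nf_inj p σ hσ).comp π.injective)
  refine ⟨π, ⟨fun i j hij => hsm.lt_iff_lt.mp (hPN _ _ hij),
    (pi_iff p π σ).mpr ⟨hσ, hsm⟩⟩, ?_⟩
  rintro π' ⟨hlin', hpi'⟩
  have hsm' : StrictMono (fun i => Nf p σ (π' i)) := ((pi_iff p π' σ).mp hpi').2
  have h := Tuple.unique_monotone (f := Nf p σ) (σ := π') (τ := π)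
    hsm'.monotone hsm.monotone
  exact Equiv.ext fun i => Nf_inj p σ hσ (congrFun h i)

private lemma aux_part2 (p : ℕ) (π : Equiv.Perm (Fin p)) (σ : Fin p → ℤ)
    (hpi : IsEnrichedPiPartition p π σ) (i j : Fin p) (hab : π.symm i < π.symm j) :
    enrLE (σ j) (σ i) ∧ (σ i = σ j → 0 < σ i → i < j) ∧ (σ i = σ j → σ i < 0 → j < i) := by
  have h := hpi.2 (π.symm i) (π.symm j) hab
  simpa using h

/-- **Stembridge's fundamental theorem of enriched `P`-partitions** : every enriched
`P`-partition is an enriched `π`-partition for exactly one linear extension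
`π ∈ L(P)`, and every enriched `π`-partition for `π ∈ L(P)` is an enriched
`P`-partition; so the enriched `P`-partitions are the disjoint union over `L(P)`
of the enriched `π`-partitions. -/
theorem enriched_fundamental_theorem (p : ℕ) (hp : 0 < p)
    (P : PartialOrder (Fin p)) :
    (∀ σ : Fin p → ℤ, IsEnrichedPPartition p P σ →
        ∃! π : Equiv.Perm (Fin p), IsLinExt p P π ∧ IsEnrichedPiPartition p π σ) ∧
    (∀ π : Equiv.Perm (Fin p), IsLinExt p P π →
        ∀ σ : Fin p → ℤ, IsEnrichedPiPartition p π σ → IsEnrichedPPartition p P σ) := by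
  constructor
  · intro σ hσP
    obtain ⟨hσ, hP⟩ := hσP
    have hPN : ∀ i j : Fin p, P.lt i j → Nf p σ i < Nf p σ j := by
      intro i j hij
      obtain ⟨h1, h2, h3⟩ := hP i j hij
      rw [Nf_lt_iff p σ hσ]
      by_cases he : σ i = σ j
      · refine Or.inr ⟨he, ?_⟩
        rcases (hσ i).lt_or_gt with hs | hs
        · exact Or.inr ⟨hs, h3 he hs⟩
        · exact Or.inl ⟨hs, h2 he hs⟩
      · exact Or.inl ⟨h1, he⟩
    exact aux_exun p σ hσ P.lt hPN
  · intro π hlin σ hpi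
    refine ⟨hpi.1, fun i j hij => aux_part2 p π σ hpi i j ?_⟩
    apply hlin
    simpa using hij
end
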